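/- If X = [x_1, ..., x_N] is a d×N complex matrix with unit-norm columns and N > d, then the maximum over i ≠ j of |x_i^H x_j| is at least sqrt((N-d)/(d(N-1))) (the Welch bound). -/

import Mathlib

open Matrix

/-- Welch bound: for unit-norm columns with d < N, the maximal cross-correlation
is at least sqrt((N-d)/(d(N-1))). -/
theorem welch_bound (d N : ℕ) (hd : 0 < d) (hdN : d < N)
    (X : Matrix (Fin d) (Fin N) ℂ)
    (hunit : ∀ i : Fin N, star (fun k => X k i) ⬝ᵥ (fun k => X k i) = 1)
    (μ : ℝ)
    (hμ : ∀ i j : Fin N, i ≠ j →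
      ‖star (fun k => X k i) ⬝ᵥ (fun k => X k j)‖ ≤ μ) :
    Real.sqrt (((N : ℝ) - d) / (d * ((N : ℝ) - 1))) ≤ μ := by
  classical
  -- Gram entries
  set g : Fin N → Fin N → ℂ := fun i j => ∑ k, (starRingEnd ℂ) (X k i) * X k j with hg
  have hgdot : ∀ i j, g i j = star (fun k => X k i) ⬝ᵥ (fun k => X k j) := by
    intro i j; simp [hg, dotProduct, Pi.star_apply, mul_comm]
  have hgii : ∀ i, g i i = 1 := by
    intro i; rw [hgdot]; exact hunit i
  -- the "frame operator" entries
  set a : Fin d → Fin d → ℂ := fun k l => ∑ j, X k j * (starRingEnd ℂ) (X l j) with ha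
  -- total Frobenius energy
  set T : ℝ := ∑ i, ∑ j, Complex.normSq (g i j) with hT
  -- Step A: T = ∑ k l, normSq (a k l)
  have stepA : T = ∑ k, ∑ l, Complex.normSq (a k l) := by
    have : (T : ℂ) = ∑ k, ∑ l, (Complex.normSq (a k l) : ℂ) := by
      push_cast [hT]
      have swap4 : ∀ (F : Fin N → Fin N → Fin d → Fin d → ℂ),
          (∑ i, ∑ j, ∑ k, ∑ l, F i j k l) = ∑ k, ∑ l, ∑ i, ∑ j, F i j k l := by
        intro F
        calc (∑ i, ∑ j, ∑ k, ∑ l, F i j k l)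
            = ∑ i, ∑ k, ∑ j, ∑ l, F i j k l :=
              Finset.sum_congr rfl fun i _ => Finset.sum_comm
          _ = ∑ k, ∑ i, ∑ j, ∑ l, F i j k l := Finset.sum_comm
          _ = ∑ k, ∑ i, ∑ l, ∑ j, F i j k l :=
              Finset.sum_congr rfl fun k _ => Finset.sum_congr rfl fun i _ => Finset.sum_comm
          _ = ∑ k, ∑ l, ∑ i, ∑ j, F i j k l :=
              Finset.sum_congr rfl fun k _ => Finset.sum_comm
      calc (∑ i, ∑ j, (Complex.normSq (g i j) : ℂ))
          = ∑ i, ∑ j, g i j * (starRingEnd ℂ) (g i j) := by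
            simp [← Complex.mul_conj]
        _ = ∑ i, ∑ j, (∑ k, (starRingEnd ℂ) (X k i) * X k j) * (∑ l, X l i * (starRingEnd ℂ) (X l j)) := by
            refine Finset.sum_congr rfl fun i _ => Finset.sum_congr rfl fun j _ => ?_
            rw [hg]
            simp only [map_sum, _root_.map_mul, Complex.conj_conj]
        _ = ∑ i, ∑ j, ∑ k, ∑ l, ((starRingEnd ℂ) (X k i) * X l i) * (X k j * (starRingEnd ℂ) (X l j)) := by
            refine Finset.sum_congr rfl fun i _ => Finset.sum_congr rfl fun j _ => ?_
            rw [Finset.sum_mul_sum]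
            exact Finset.sum_congr rfl fun k _ => Finset.sum_congr rfl fun l _ => by ring
        _ = ∑ k, ∑ l, ∑ i, ∑ j, ((starRingEnd ℂ) (X k i) * X l i) * (X k j * (starRingEnd ℂ) (X l j)) :=
            swap4 _
        _ = ∑ k, ∑ l, (∑ i, (starRingEnd ℂ) (X k i) * X l i) * (∑ j, X k j * (starRingEnd ℂ) (X l j)) := by
            refine Finset.sum_congr rfl fun k _ => Finset.sum_congr rfl fun l _ => ?_
            rw [Finset.sum_mul_sum]
        _ = ∑ k, ∑ l, (starRingEnd ℂ) (a k l) * a k l := by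
            refine Finset.sum_congr rfl fun k _ => Finset.sum_congr rfl fun l _ => ?_
            rw [ha]
            simp only [map_sum, _root_.map_mul, Complex.conj_conj]
        _ = ∑ k, ∑ l, (Complex.normSq (a k l) : ℂ) := by
            simp [Complex.normSq_eq_conj_mul_self]
    exact_mod_cast this
  -- diagonal of a is real: row energies
  set r : Fin d → ℝ := fun k => ∑ j, Complex.normSq (X k j) with hr
  have hakk : ∀ k, a k k = (r k : ℂ) := by
    intro k
    have h1 : a k k = ∑ j, (Complex.normSq (X k j) : ℂ) := by
      simp [ha, Complex.mul_conj]
    rw [h1, hr]; push_cast; ring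
  have hrsum : ∑ k, r k = N := by
    have : ∑ k, ∑ j, Complex.normSq (X k j) = ∑ j, ∑ k, Complex.normSq (X k j) :=
      Finset.sum_comm
    rw [hr]  -- r is defn
    calc ∑ k, ∑ j, Complex.normSq (X k j) = ∑ j : Fin N, ∑ k, Complex.normSq (X k j) := this
      _ = ∑ j : Fin N, (1 : ℝ) := by
          refine Finset.sum_congr rfl fun j _ => ?_
          have h1 := hunit j
          have : (∑ k, (Complex.normSq (X k j) : ℂ)) = 1 := by
            rw [← h1]; simp [dotProduct, Pi.star_apply, Complex.normSq_eq_conj_mul_self]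
          exact_mod_cast this
      _ = N := by simp
  -- Step B: lower bound T ≥ N^2 / d
  have stepB : (N : ℝ)^2 / d ≤ T := by
    have h1 : (∑ k, r k)^2 ≤ (d : ℝ) * ∑ k, (r k)^2 := by
      simpa using sq_sum_le_card_mul_sum_sq (s := (Finset.univ : Finset (Fin d))) (f := r)
    have h2 : ∑ k, (r k)^2 ≤ T := by
      rw [stepA]
      calc ∑ k, (r k)^2 = ∑ k, Complex.normSq (a k k) := by
            refine Finset.sum_congr rfl fun k _ => ?_
            rw [hakk k, Complex.normSq_ofReal, sq]
        _ ≤ ∑ k, ∑ l, Complex.normSq (a k l) := by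
            refine Finset.sum_le_sum fun k _ => ?_
            exact Finset.single_le_sum (f := fun l => Complex.normSq (a k l))
              (fun l _ => Complex.normSq_nonneg _) (Finset.mem_univ k)
    rw [div_le_iff₀ (by exact_mod_cast hd)]
    calc (N:ℝ)^2 = (∑ k, r k)^2 := by rw [hrsum]
      _ ≤ (d : ℝ) * ∑ k, (r k)^2 := h1
      _ ≤ (d : ℝ) * T := by
          have : (0:ℝ) ≤ (d:ℝ) := by positivity
          nlinarith [h2]
      _ = T * d := by ring
  -- μ nonneg
  have hN2 : 2 ≤ N := by omega
  have hμ0 : 0 ≤ μ := by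
    have h01 : (⟨0, by omega⟩ : Fin N) ≠ ⟨1, by omega⟩ := by
      simp [Fin.ext_iff]
    exact le_trans (norm_nonneg _) (hμ _ _ h01)
  -- Step C: upper bound T ≤ N + N(N-1)μ²
  have stepC : T ≤ (N : ℝ) + N * (N - 1) * μ^2 := by
    have hdiag : ∀ i : Fin N, ∑ j, Complex.normSq (g i j)
        ≤ 1 + (N - 1) * μ^2 := by
      intro i
      have := Finset.sum_eq_add_sum_sdiff_singleton_of_mem (Finset.mem_univ i)
        (fun j => Complex.normSq (g i j))
      rw [this, hgii i]
      have : ∑ j ∈ Finset.univ \ {i}, Complex.normSq (g i j)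
          ≤ ∑ j ∈ Finset.univ \ {i}, μ^2 := by
        refine Finset.sum_le_sum fun j hj => ?_
        have hji : i ≠ j := by
          simp [Finset.mem_sdiff] at hj; exact fun h => hj h.symm
        have habs : ‖g i j‖ ≤ μ := by
          rw [hgdot]; exact hμ i j hji
        calc Complex.normSq (g i j) = (‖g i j‖)^2 := (Complex.sq_norm _).symm
          _ ≤ μ^2 := by nlinarith [norm_nonneg (g i j)]
      have hcard : ((Finset.univ \ {i} : Finset (Fin N)).card : ℝ) = (N:ℝ) - 1 := by
        rw [Finset.card_sdiff_of_subset (by simp)]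
        simp
        have : 1 ≤ N := by omega
        push_cast [Nat.cast_sub this]
        ring
      simp only [Complex.normSq_one]
      rw [Finset.sum_const, nsmul_eq_mul] at this
      rw [hcard] at this
      linarith
    calc T ≤ ∑ i : Fin N, (1 + ((N:ℝ) - 1) * μ^2) := Finset.sum_le_sum fun i _ => hdiag i
      _ = (N : ℝ) + N * ((N:ℝ) - 1) * μ^2 := by simp; ring
  -- combine
  have key : ((N : ℝ) - d) / (d * ((N : ℝ) - 1)) ≤ μ^2 := by
    have hNpos : (0:ℝ) < N := by positivity
    have hd' : (0:ℝ) < d := by exact_mod_cast hd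
    have hN1 : (1:ℝ) ≤ (N:ℝ) - 1 := by
      have : (2:ℝ) ≤ N := by exact_mod_cast hN2
      linarith
    have hdenom : (0:ℝ) < d * ((N:ℝ) - 1) := by nlinarith
    rw [div_le_iff₀ hdenom]
    -- from N²/d ≤ N + N(N-1)μ²
    have h := le_trans stepB stepC
    have h2 : (N:ℝ)^2 ≤ ((N : ℝ) + N * ((N:ℝ) - 1) * μ^2) * d := by
      rw [div_le_iff₀ hd'] at h; exact h
    nlinarith
  calc Real.sqrt (((N : ℝ) - d) / (d * ((N : ℝ) - 1)))
      ≤ Real.sqrt (μ^2) := Real.sqrt_le_sqrt key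
    _ = μ := Real.sqrt_sq hμ0
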